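/- Every complex root z of the polynomial ρ(z) = z^12 − 2·z^11 + 2·z^10 − z^9 − z^3 + 2·z^2 − 2·z + 1 satisfies |z| = 1; moreover z = 1 is a root of multiplicity exactly 2 (i.e. (z−1)² divides ρ but (z−1)³ does not), and every root different from 1 is a simple root of ρ. -/

import Mathlib

open Polynomial

/-- The characteristic polynomial of the Quinlan–Tremaine 12-step method. -/
noncomputable def rhoQT : ℂ[X] :=
  X ^ 12 - 2 * X ^ 11 + 2 * X ^ 10 - X ^ 9 - X ^ 3 + 2 * X ^ 2 - 2 * X + 1

lemma rhoQT_ne_zero : rhoQT ≠ 0 := by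
  intro h
  have h1 : rhoQT.eval 0 = 1 := by rw [rhoQT]; simp
  rw [h] at h1
  simp at h1

lemma rhoQT_eval (z : ℂ) (h : rhoQT.IsRoot z) :
    (z ^ 9 - 1) * (z - 1) * (z ^ 2 - z + 1) = 0 := by
  have := h
  rw [IsRoot, rhoQT] at this
  simp only [eval_add, eval_sub, eval_mul, eval_pow, eval_X, eval_one, eval_ofNat] at this
  linear_combination this

lemma deriv_eval (z : ℂ) (h : (derivative rhoQT).IsRoot z) :
    12*z^11 - 22*z^10 + 20*z^9 - 9*z^8 - 3*z^2 + 4*z - 2 = 0 := by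
  rw [IsRoot, rhoQT] at h
  simp only [derivative_add, derivative_sub, derivative_mul, derivative_pow,
    derivative_X, derivative_one, derivative_ofNat] at h
  simp only [eval_add, eval_sub, eval_mul, eval_pow, eval_X, eval_one, eval_ofNat,
    eval_natCast, eval_C, eval_zero] at h
  push_cast at h
  linear_combination h

lemma no_double_root (z : ℂ) (hz1 : z ≠ 1) (hroot : rhoQT.IsRoot z)
    (hd : (derivative rhoQT).IsRoot z) : False := by
  have he := rhoQT_eval z hroot
  have hde := deriv_eval z hd
  rcases mul_eq_zero.mp he with h | hB
  · rcases mul_eq_zero.mp h with h9 | h1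
    · -- z^9 = 1
      have hz9 : z ^ 9 = 1 := by linear_combination h9
      have hB : z ^ 8 * (z - 1) * (z ^ 2 - z + 1) = 0 := by
        linear_combination (1/9 : ℂ) * hde + (-(1/3 : ℂ)*z^2 + (4/9 : ℂ)*z - 2/9) * hz9
      rcases mul_eq_zero.mp hB with h | hq
      · rcases mul_eq_zero.mp h with h8 | h1
        · have : z ^ 9 = 0 := by
            have : z = 0 := by
              have := pow_eq_zero_iff (n := 8) (by norm_num) |>.mp h8
              exact this
            simp [this]
          rw [hz9] at this; exact one_ne_zero this
        · exact hz1 (by linear_combination h1)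
      · -- z^2 - z + 1 = 0 and z^9 = 1 : contradiction
        have h3 : z ^ 3 = -1 := by linear_combination (z + 1) * hq
        have : (1 : ℂ) = -1 := by
          calc (1:ℂ) = z ^ 9 := hz9.symm
          _ = (z ^ 3) ^ 3 := by ring
          _ = -1 := by rw [h3]; ring
        norm_num at this
    · exact hz1 (by linear_combination h1)
  · -- z^2 - z + 1 = 0
    have h2 : 2 * z + 2 = 0 := by
      linear_combination hde - (12*z^9 - 10*z^8 - 2*z^7 - z^6 + z^5 + 2*z^4 + z^3 - z^2 - 2*z - 4) * hB
    have hz : z = -1 := by linear_combination (1/2 : ℂ) * h2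
    rw [hz] at hB
    norm_num at hB

/-- Zero-stability of the Quinlan–Tremaine method: all roots of its characteristic
polynomial lie on the unit circle, `z = 1` is a root of multiplicity exactly two,
and every other root is simple. -/
theorem quinlan_tremaine_zero_stable :
    (∀ z : ℂ, rhoQT.IsRoot z → ‖z‖ = 1) ∧
    ((X - 1) ^ 2 ∣ rhoQT ∧ ¬ (X - 1) ^ 3 ∣ rhoQT) ∧
    (∀ z : ℂ, z ≠ 1 → rhoQT.IsRoot z → rootMultiplicity z rhoQT = 1) := by
  refine ⟨?_, ⟨?_, ?_⟩, ?_⟩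
  · intro z hz
    have he := rhoQT_eval z hz
    rcases mul_eq_zero.mp he with h | hB
    · rcases mul_eq_zero.mp h with h9 | h1
      · have hz9 : z ^ 9 = 1 := by linear_combination h9
        exact Complex.norm_eq_one_of_pow_eq_one hz9 (by norm_num)
      · have : z = 1 := by linear_combination h1
        simp [this]
    · have h6 : z ^ 6 = 1 := by
        have h3 : z ^ 3 = -1 := by linear_combination (z + 1) * hB
        calc z ^ 6 = (z ^ 3) ^ 2 := by ring
        _ = 1 := by rw [h3]; ring
      exact Complex.norm_eq_one_of_pow_eq_one h6 (by norm_num)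
  · refine ⟨(X^8 + X^7 + X^6 + X^5 + X^4 + X^3 + X^2 + X + 1) * (X^2 - X + 1), ?_⟩
    rw [rhoQT]; ring
  · intro hdvd
    set g : ℂ[X] := (X^8 + X^7 + X^6 + X^5 + X^4 + X^3 + X^2 + X + 1) * (X^2 - X + 1) with hg
    have hfac : rhoQT = (X - 1) ^ 2 * g := by rw [rhoQT, hg]; ring
    rw [hfac] at hdvd
    have hne : ((X : ℂ[X]) - 1) ^ 2 ≠ 0 := pow_ne_zero _ (by simpa using X_sub_C_ne_zero (1 : ℂ))
    have hdvd' : (X - 1 : ℂ[X]) ∣ g := by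
      have : (X - 1 : ℂ[X]) ^ 2 * (X - 1) ∣ (X - 1) ^ 2 * g := by
        rw [show ((X : ℂ[X]) - 1) ^ 2 * (X - 1) = (X - 1) ^ 3 by ring]
        exact hdvd
      exact (mul_dvd_mul_iff_left hne).mp this
    have hroot : g.IsRoot 1 := by
      have : (X - C (1:ℂ)) ∣ g := by simpa using hdvd'
      exact dvd_iff_isRoot.mp this
    rw [hg] at hroot
    simp only [IsRoot, eval_mul, eval_add, eval_sub, eval_pow, eval_X, eval_one] at hroot
    norm_num at hroot
  · intro z hz1 hroot
    refine le_antisymm ?_ ((rootMultiplicity_pos rhoQT_ne_zero).mpr hroot)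
    by_contra hlt
    push_neg at hlt
    have h2 : 1 < rootMultiplicity z rhoQT := hlt
    have hd : (derivative^[1] rhoQT).IsRoot z :=
      isRoot_iterate_derivative_of_lt_rootMultiplicity h2
    simp only [Function.iterate_one] at hd
    exact no_double_root z hz1 hroot hd
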